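/- There is a bijection f from Av_n(132) to Av_n(231) preserving the descent set: Des f(σ) = Des σ for all σ ∈ Av_n(132). -/

import Mathlib

open scoped Classical

/-- `σ` contains the pattern `π`. -/
def permContains {n k : ℕ} (σ : Equiv.Perm (Fin n)) (π : Equiv.Perm (Fin k)) : Prop :=
  ∃ f : Fin k → Fin n, StrictMono f ∧ ∀ i j : Fin k, π i < π j ↔ σ (f i) < σ (f j)

/-- `σ` avoids the pattern `π`. -/
def permAvoids {n k : ℕ} (σ : Equiv.Perm (Fin n)) (π : Equiv.Perm (Fin k)) : Prop :=
  ¬ permContains σ π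

def p123 : Equiv.Perm (Fin 3) := 1
def p132 : Equiv.Perm (Fin 3) := Equiv.swap 1 2
def p213 : Equiv.Perm (Fin 3) := Equiv.swap 0 1
def p231 : Equiv.Perm (Fin 3) := finRotate 3
def p312 : Equiv.Perm (Fin 3) := (finRotate 3)⁻¹
def p321 : Equiv.Perm (Fin 3) := Equiv.swap 0 2

/-- Descent set of a permutation, as a set of (1-based) positions `i` with `a_i > a_{i+1}`. -/
def desSet {n : ℕ} (σ : Equiv.Perm (Fin n)) : Finset ℕ :=
  (Finset.Ico 1 n).filter
    (fun i => ∀ h : i < n, σ ⟨i, h⟩ < σ ⟨i - 1, Nat.lt_of_le_of_lt (Nat.sub_le i 1) h⟩)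

/-- Major index: sum of descent positions. -/
def majIdx {n : ℕ} (σ : Equiv.Perm (Fin n)) : ℕ := ∑ i ∈ desSet σ, i

/-- Number of descents. -/
def desNum {n : ℕ} (σ : Equiv.Perm (Fin n)) : ℕ := (desSet σ).card

/-- Number of inversions. -/
def invNum {n : ℕ} (σ : Equiv.Perm (Fin n)) : ℕ :=
  ((Finset.univ : Finset (Fin n × Fin n)).filter (fun p => p.1 < p.2 ∧ σ p.2 < σ p.1)).card


namespace DPB



def wVal (l : List ℕ) (i : ℕ) : ℕ := l.getD i 0

lemma wVal_eq_get (l : List ℕ) {i : ℕ} (h : i < l.length) : wVal l i = l.get ⟨i, h⟩ := by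
  simp [wVal, List.getD_eq_getElem?_getD, List.getElem?_eq_getElem h]

lemma wVal_mem {l : List ℕ} {i : ℕ} (h : i < l.length) : wVal l i ∈ l := by
  rw [wVal_eq_get l h]; exact List.get_mem _ _

lemma wVal_map {l : List ℕ} (f : ℕ → ℕ) {i : ℕ} (h : i < l.length) :
    wVal (l.map f) i = f (wVal l i) := by
  have h' : i < (l.map f).length := by simpa using h
  rw [wVal_eq_get _ h', wVal_eq_get _ h]; simp

lemma mem_iff_wVal {l : List ℕ} {x : ℕ} : x ∈ l ↔ ∃ i, i < l.length ∧ wVal l i = x := by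
  constructor
  · intro hx
    obtain ⟨i, hi⟩ := List.get_of_mem hx
    exact ⟨i.1, i.2, by rw [wVal_eq_get l i.2]; simpa using hi⟩
  · rintro ⟨i, hi, rfl⟩; exact wVal_mem hi

lemma wVal_append_left {u v : List ℕ} {i : ℕ} (h : i < u.length) :
    wVal (u ++ v) i = wVal u i := by
  have h' : i < (u ++ v).length := by simp; omega
  rw [wVal_eq_get _ h', wVal_eq_get _ h]
  simp [List.getElem_append_left h]

lemma wVal_append_mid {u v : List ℕ} {M : ℕ} :
    wVal (u ++ M :: v) u.length = M := by
  have h' : u.length < (u ++ M :: v).length := by simp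
  rw [wVal_eq_get _ h']
  rw [List.get_eq_getElem, List.getElem_append_right (le_refl u.length)]
  simp only [Nat.sub_self, List.getElem_cons_zero]

lemma wVal_append_right {u v : List ℕ} {M i : ℕ} (h1 : u.length < i)
    (h2 : i < (u ++ M :: v).length) :
    wVal (u ++ M :: v) i = wVal v (i - u.length - 1) := by
  have h3 : i - u.length - 1 < v.length := by simp at h2; omega
  rw [wVal_eq_get _ h2, wVal_eq_get _ h3]
  have : ¬ i < u.length := by omega
  simp only [List.get_eq_getElem, List.getElem_append_right (le_of_not_gt this)]
  set j := i - u.length - 1 with hj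
  have e1 : i - u.length = j + 1 := by omega
  simp only [e1, List.getElem_cons_succ, Nat.add_sub_cancel]

lemma wVal_take {l : List ℕ} {k i : ℕ} (h : i < (l.take k).length) :
    wVal (l.take k) i = wVal l i := by
  have h2 : i < l.length := by simp at h; omega
  rw [wVal_eq_get _ h, wVal_eq_get _ h2]
  simp [List.getElem_take]

lemma wVal_drop {l : List ℕ} {k i : ℕ} (h : i < (l.drop k).length) :
    wVal (l.drop k) i = wVal l (k + i) := by
  have h2 : k + i < l.length := by simp at h; omega
  rw [wVal_eq_get _ h, wVal_eq_get _ h2]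
  simp [List.getElem_drop]

def W132 (l : List ℕ) : Prop :=
  ∃ p q r, p < q ∧ q < r ∧ r < l.length ∧ wVal l p < wVal l r ∧ wVal l r < wVal l q

def W231 (l : List ℕ) : Prop :=
  ∃ p q r, p < q ∧ q < r ∧ r < l.length ∧ wVal l r < wVal l p ∧ wVal l p < wVal l q

lemma not_W132_take {l : List ℕ} (k : ℕ) (h : ¬ W132 l) : ¬ W132 (l.take k) := by
  rintro ⟨p, q, r, hpq, hqr, hr, h1, h2⟩
  have hp : p < (l.take k).length := by omega
  have hq : q < (l.take k).length := by omega
  rw [wVal_take hp, wVal_take hr] at h1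
  rw [wVal_take hr, wVal_take hq] at h2
  exact h ⟨p, q, r, hpq, hqr, by simp at hr ⊢; omega, h1, h2⟩

lemma not_W132_drop {l : List ℕ} (k : ℕ) (h : ¬ W132 l) : ¬ W132 (l.drop k) := by
  rintro ⟨p, q, r, hpq, hqr, hr, h1, h2⟩
  have hp : p < (l.drop k).length := by omega
  have hq : q < (l.drop k).length := by omega
  rw [wVal_drop hp, wVal_drop hr] at h1
  rw [wVal_drop hr, wVal_drop hq] at h2
  exact h ⟨k + p, k + q, k + r, by omega, by omega, by simp at hr ⊢; omega, h1, h2⟩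

lemma not_W231_take {l : List ℕ} (k : ℕ) (h : ¬ W231 l) : ¬ W231 (l.take k) := by
  rintro ⟨p, q, r, hpq, hqr, hr, h1, h2⟩
  have hp : p < (l.take k).length := by omega
  have hq : q < (l.take k).length := by omega
  rw [wVal_take hp, wVal_take hr] at h1
  rw [wVal_take hp, wVal_take hq] at h2
  exact h ⟨p, q, r, hpq, hqr, by simp at hr ⊢; omega, h1, h2⟩

lemma not_W231_drop {l : List ℕ} (k : ℕ) (h : ¬ W231 l) : ¬ W231 (l.drop k) := by
  rintro ⟨p, q, r, hpq, hqr, hr, h1, h2⟩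
  have hp : p < (l.drop k).length := by omega
  have hq : q < (l.drop k).length := by omega
  rw [wVal_drop hp, wVal_drop hr] at h1
  rw [wVal_drop hp, wVal_drop hq] at h2
  exact h ⟨k + p, k + q, k + r, by omega, by omega, by simp at hr ⊢; omega, h1, h2⟩

lemma W132_map_iff {l : List ℕ} {f : ℕ → ℕ}
    (hf : ∀ x ∈ l, ∀ y ∈ l, (f x < f y ↔ x < y)) : W132 (l.map f) ↔ W132 l := by
  constructor <;> rintro ⟨p, q, r, hpq, hqr, hr, h1, h2⟩ <;>
    [skip; skip] <;> refine ⟨p, q, r, hpq, hqr, ?_, ?_, ?_⟩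
  · simpa using hr
  · have hr' : r < l.length := by simpa using hr
    have hp' : p < l.length := by omega
    have hq' : q < l.length := by omega
    rw [wVal_map f hp', wVal_map f hr'] at h1
    exact (hf _ (wVal_mem hp') _ (wVal_mem hr')).mp h1
  · have hr' : r < l.length := by simpa using hr
    have hq' : q < l.length := by omega
    rw [wVal_map f hq', wVal_map f hr'] at h2
    exact (hf _ (wVal_mem hr') _ (wVal_mem hq')).mp h2
  · simpa using hr
  · have hp' : p < l.length := by omega
    rw [wVal_map f hp', wVal_map f hr]
    exact (hf _ (wVal_mem hp') _ (wVal_mem hr)).mpr h1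
  · have hq' : q < l.length := by omega
    rw [wVal_map f hq', wVal_map f hr]
    exact (hf _ (wVal_mem hr) _ (wVal_mem hq')).mpr h2

lemma W231_map_iff {l : List ℕ} {f : ℕ → ℕ}
    (hf : ∀ x ∈ l, ∀ y ∈ l, (f x < f y ↔ x < y)) : W231 (l.map f) ↔ W231 l := by
  constructor <;> rintro ⟨p, q, r, hpq, hqr, hr, h1, h2⟩ <;>
    [skip; skip] <;> refine ⟨p, q, r, hpq, hqr, ?_, ?_, ?_⟩
  · simpa using hr
  · have hr' : r < l.length := by simpa using hr
    have hp' : p < l.length := by omega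
    rw [wVal_map f hp', wVal_map f hr'] at h1
    exact (hf _ (wVal_mem hr') _ (wVal_mem hp')).mp h1
  · have hr' : r < l.length := by simpa using hr
    have hp' : p < l.length := by omega
    have hq' : q < l.length := by omega
    rw [wVal_map f hq', wVal_map f hp'] at h2
    exact (hf _ (wVal_mem hp') _ (wVal_mem hq')).mp h2
  · simpa using hr
  · have hp' : p < l.length := by omega
    rw [wVal_map f hp', wVal_map f hr]
    exact (hf _ (wVal_mem hr) _ (wVal_mem hp')).mpr h1
  · have hp' : p < l.length := by omega
    have hq' : q < l.length := by omega
    rw [wVal_map f hq', wVal_map f hp']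
    exact (hf _ (wVal_mem hp') _ (wVal_mem hq')).mpr h2


lemma not_W231_append {u v : List ℕ} {M : ℕ}
    (hu : ¬ W231 u) (hv : ¬ W231 v)
    (huv : ∀ x ∈ u, ∀ y ∈ v, x < y)
    (hMu : ∀ x ∈ u, x < M) (hMv : ∀ x ∈ v, x < M) :
    ¬ W231 (u ++ M :: v) := by
  rintro ⟨p, q, r, hpq, hqr, hr, h1, h2⟩
  have hlen : (u ++ M :: v).length = u.length + 1 + v.length := by simp; omega
  rcases lt_trichotomy q u.length with hq | hq | hq
  · -- q in u, so p in u
    have hp : p < u.length := by omega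
    rcases lt_trichotomy r u.length with hrc | hrc | hrc
    · rw [wVal_append_left hrc, wVal_append_left hp] at h1
      rw [wVal_append_left hp, wVal_append_left hq] at h2
      exact hu ⟨p, q, r, hpq, hqr, hrc, h1, h2⟩
    · subst hrc
      rw [wVal_append_mid, wVal_append_left hp] at h1
      exact absurd h1 (not_lt_of_gt (hMu _ (wVal_mem hp)))
    · rw [wVal_append_right hrc hr, wVal_append_left hp] at h1
      have hrv : r - u.length - 1 < v.length := by rw [hlen] at hr; omega
      exact absurd h1 (not_lt_of_gt (huv _ (wVal_mem hp) _ (wVal_mem hrv)))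
  · -- q is M position
    subst hq
    have hp : p < u.length := hpq
    have hrc : u.length < r := hqr
    rw [wVal_append_right hrc hr, wVal_append_left hp] at h1
    have hrv : r - u.length - 1 < v.length := by rw [hlen] at hr; omega
    exact absurd h1 (not_lt_of_gt (huv _ (wVal_mem hp) _ (wVal_mem hrv)))
  · -- q in v, so r in v
    have hrc : u.length < r := by omega
    have hrv : r - u.length - 1 < v.length := by rw [hlen] at hr; omega
    have hqv : q - u.length - 1 < v.length := by omega
    have hqlt : q < (u ++ M :: v).length := by omega
    rcases lt_trichotomy p u.length with hpc | hpc | hpc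
    · rw [wVal_append_right hrc hr, wVal_append_left hpc] at h1
      exact absurd (huv _ (wVal_mem hpc) _ (wVal_mem hrv)) (not_lt_of_gt h1)
    · subst hpc
      rw [wVal_append_mid, wVal_append_right hq hqlt] at h2
      exact absurd h2 (not_lt_of_gt (hMv _ (wVal_mem hqv)))
    · rw [wVal_append_right hrc hr, wVal_append_right hpc (by omega)] at h1
      rw [wVal_append_right hpc (by omega), wVal_append_right hq hqlt] at h2
      exact hv ⟨p - u.length - 1, q - u.length - 1, r - u.length - 1,
        by omega, by omega, hrv, h1, h2⟩

lemma not_W132_append {u v : List ℕ} {M : ℕ}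
    (hu : ¬ W132 u) (hv : ¬ W132 v)
    (huv : ∀ x ∈ u, ∀ y ∈ v, y < x)
    (hMu : ∀ x ∈ u, x < M) (hMv : ∀ x ∈ v, x < M) :
    ¬ W132 (u ++ M :: v) := by
  rintro ⟨p, q, r, hpq, hqr, hr, h1, h2⟩
  have hlen : (u ++ M :: v).length = u.length + 1 + v.length := by simp; omega
  rcases lt_trichotomy q u.length with hq | hq | hq
  · have hp : p < u.length := by omega
    rcases lt_trichotomy r u.length with hrc | hrc | hrc
    · rw [wVal_append_left hp, wVal_append_left hrc] at h1
      rw [wVal_append_left hq, wVal_append_left hrc] at h2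
      exact hu ⟨p, q, r, hpq, hqr, hrc, h1, h2⟩
    · subst hrc
      rw [wVal_append_mid, wVal_append_left hq] at h2
      exact absurd h2 (not_lt_of_gt (hMu _ (wVal_mem hq)))
    · rw [wVal_append_right hrc hr, wVal_append_left hp] at h1
      have hrv : r - u.length - 1 < v.length := by rw [hlen] at hr; omega
      exact absurd (huv _ (wVal_mem hp) _ (wVal_mem hrv)) (not_lt_of_gt h1)
  · subst hq
    have hp : p < u.length := hpq
    have hrc : u.length < r := hqr
    rw [wVal_append_right hrc hr, wVal_append_left hp] at h1
    have hrv : r - u.length - 1 < v.length := by rw [hlen] at hr; omega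
    exact absurd (huv _ (wVal_mem hp) _ (wVal_mem hrv)) (not_lt_of_gt h1)
  · have hrc : u.length < r := by omega
    have hrv : r - u.length - 1 < v.length := by rw [hlen] at hr; omega
    have hqv : q - u.length - 1 < v.length := by omega
    have hqlt : q < (u ++ M :: v).length := by omega
    rcases lt_trichotomy p u.length with hpc | hpc | hpc
    · rw [wVal_append_right hrc hr, wVal_append_left hpc] at h1
      exact absurd (huv _ (wVal_mem hpc) _ (wVal_mem hrv)) (not_lt_of_gt h1)
    · subst hpc
      rw [wVal_append_mid, wVal_append_right hrc hr] at h1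
      exact absurd h1 (not_lt_of_gt (hMv _ (wVal_mem hrv)))
    · rw [wVal_append_right hrc hr, wVal_append_right hpc (by omega)] at h1
      rw [wVal_append_right hrc hr, wVal_append_right hq hqlt] at h2
      exact hv ⟨p - u.length - 1, q - u.length - 1, r - u.length - 1,
        by omega, by omega, hrv, h1, h2⟩

def wDes (l : List ℕ) : Finset ℕ :=
  (Finset.Ico 1 l.length).filter (fun i => wVal l i < wVal l (i - 1))

lemma wDes_map_iff {l : List ℕ} {f : ℕ → ℕ}
    (hf : ∀ x ∈ l, ∀ y ∈ l, (f x < f y ↔ x < y)) : wDes (l.map f) = wDes l := by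
  unfold wDes
  ext i
  simp only [Finset.mem_filter, Finset.mem_Ico, List.length_map]
  constructor <;> rintro ⟨⟨h1, h2⟩, h3⟩ <;> refine ⟨⟨h1, h2⟩, ?_⟩ <;>
    have hi1 : i - 1 < l.length := by omega
  · rw [wVal_map f h2, wVal_map f hi1] at h3
    exact (hf _ (wVal_mem h2) _ (wVal_mem hi1)).mp h3
  · rw [wVal_map f h2, wVal_map f hi1]
    exact (hf _ (wVal_mem h2) _ (wVal_mem hi1)).mpr h3

lemma mem_wDes_sandwich {u v : List ℕ} {M : ℕ}
    (hMu : ∀ x ∈ u, x < M) (hMv : ∀ x ∈ v, x < M) (i : ℕ) :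
    i ∈ wDes (u ++ M :: v) ↔
      (i ∈ wDes u ∨ (i = u.length + 1 ∧ v ≠ []) ∨ ∃ j ∈ wDes v, i = j + u.length + 1) := by
  have hL : (u ++ M :: v).length = u.length + 1 + v.length := by simp; omega
  simp only [wDes, Finset.mem_filter, Finset.mem_Ico]
  constructor
  · rintro ⟨⟨h1, h2⟩, h3⟩
    rw [hL] at h2
    rcases lt_trichotomy i u.length with hc | hc | hc
    · left
      have hi1 : i - 1 < u.length := by omega
      rw [wVal_append_left hc, wVal_append_left hi1] at h3
      exact ⟨⟨h1, hc⟩, h3⟩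
    · exfalso
      subst hc
      have hu1 : u.length - 1 < u.length := by omega
      rw [wVal_append_mid, wVal_append_left hu1] at h3
      exact not_lt_of_gt (hMu _ (wVal_mem hu1)) h3
    · rcases eq_or_lt_of_le (show u.length + 1 ≤ i by omega) with hc2 | hc2
      · right; left
        refine ⟨hc2.symm, ?_⟩
        intro hv; subst hv; simp at h2; omega
      · right; right
        refine ⟨i - u.length - 1, ?_, by omega⟩
        have hjv : i - u.length - 1 < v.length := by omega
        have hj1 : i - 1 - u.length - 1 < v.length := by omega
        rw [wVal_append_right hc (by omega), wVal_append_right (show u.length < i - 1 by omega) (by omega)] at h3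
        have e : i - 1 - u.length - 1 = i - u.length - 1 - 1 := by omega
        rw [e] at h3
        exact ⟨⟨by omega, hjv⟩, h3⟩
  · rintro (⟨⟨h1, h2⟩, h3⟩ | ⟨rfl, hv⟩ | ⟨j, ⟨⟨hj1, hj2⟩, hj3⟩, rfl⟩)
    · have hi1 : i - 1 < u.length := by omega
      rw [wVal_append_left h2, wVal_append_left hi1]
      exact ⟨⟨h1, by rw [hL]; omega⟩, h3⟩
    · have hv0 : 0 < v.length := List.length_pos_iff.mpr hv
      have hlt : u.length < u.length + 1 := by omega
      rw [wVal_append_right hlt (by rw [hL]; omega)]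
      have e : u.length + 1 - 1 = u.length := by omega
      rw [e, wVal_append_mid]
      have e2 : u.length + 1 - u.length - 1 = 0 := by omega
      rw [e2]
      exact ⟨⟨by omega, by rw [hL]; omega⟩, hMv _ (wVal_mem hv0)⟩
    · have hgt : u.length < j + u.length + 1 := by omega
      have hlt2 : j + u.length + 1 < (u ++ M :: v).length := by rw [hL]; omega
      have hgt1 : u.length < j + u.length + 1 - 1 := by omega
      rw [wVal_append_right hgt hlt2, wVal_append_right hgt1 (by rw [hL]; omega)]
      have e : j + u.length + 1 - u.length - 1 = j := by omega
      have e2 : j + u.length + 1 - 1 - u.length - 1 = j - 1 := by omega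
      rw [e, e2]
      exact ⟨⟨by omega, by rw [hL]; omega⟩, hj3⟩

lemma wDes_sandwich_congr {u v u' v' : List ℕ} {M M' : ℕ}
    (hul : u'.length = u.length) (hvl : v'.length = v.length)
    (hdu : wDes u' = wDes u) (hdv : wDes v' = wDes v)
    (hMu : ∀ x ∈ u, x < M) (hMv : ∀ x ∈ v, x < M)
    (hMu' : ∀ x ∈ u', x < M') (hMv' : ∀ x ∈ v', x < M') :
    wDes (u' ++ M' :: v') = wDes (u ++ M :: v) := by
  ext i
  rw [mem_wDes_sandwich hMu hMv, mem_wDes_sandwich hMu' hMv', hdu, hdv, hul]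
  have : v' ≠ [] ↔ v ≠ [] := by
    constructor <;> intro h h2 <;> apply h <;> rw [← List.length_eq_zero_iff] at h2 ⊢ <;> omega
  rw [this]

lemma perm_range_of {l : List ℕ} (hn : l.Nodup) (hlt : ∀ x ∈ l, x < l.length) :
    l.Perm (List.range l.length) := by
  have h1 : l.toFinset = Finset.range l.length := by
    apply Finset.eq_of_subset_of_card_le
    · intro x hx
      simp only [List.mem_toFinset] at hx
      simp only [Finset.mem_range]
      exact hlt x hx
    · rw [Finset.card_range, List.toFinset_card_of_nodup hn]
  exact List.perm_of_nodup_nodup_toFinset_eq hn (List.nodup_range)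
    (by rw [h1]; ext x; simp)

lemma split_perm_range {a b : List ℕ} {M : ℕ} (hab : (a ++ b).Perm (List.range M))
    (h : ∀ x ∈ a, ∀ y ∈ b, y < x) :
    b.Perm (List.range b.length) ∧
    (∀ x ∈ a, b.length ≤ x ∧ x < M) ∧
    (a.map (fun x => x - b.length)).Perm (List.range a.length) := by
  have hlen : a.length + b.length = M := by
    have := hab.length_eq; simpa using this
  have hnd : (a ++ b).Nodup := hab.nodup_iff.mpr (List.nodup_range)
  have hmem : ∀ x, x ∈ a ++ b ↔ x < M := by
    intro x; rw [hab.mem_iff, List.mem_range]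
  have hbnd : b.Nodup := (List.nodup_append.mp hnd).2.1
  have hand : a.Nodup := (List.nodup_append.mp hnd).1
  have hdisj : ∀ x ∈ a, x ∉ b := by
    intro x hx hxb
    exact (List.nodup_append'.mp hnd).2.2 hx hxb
  -- every element of b is < b.length
  have hblt : ∀ y ∈ b, y < b.length := by
    intro y hy
    have hyM : y < M := (hmem y).mp (List.mem_append_right a hy)
    have hsub : ∀ z ≤ y, z ∈ b := by
      intro z hz
      have hzM : z < M := by omega
      rcases List.mem_append.mp ((hmem z).mpr hzM) with hz2 | hz2
      · exact absurd (h z hz2 y hy) (by omega)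
      · exact hz2
    have hs : Finset.range (y + 1) ⊆ b.toFinset := by
      intro z hz
      simp only [Finset.mem_range] at hz
      simp only [List.mem_toFinset]
      exact hsub z (by omega)
    have := Finset.card_le_card hs
    rw [Finset.card_range, List.toFinset_card_of_nodup hbnd] at this
    omega
  have hbperm : b.Perm (List.range b.length) := perm_range_of hbnd hblt
  have halt : ∀ x ∈ a, b.length ≤ x ∧ x < M := by
    intro x hx
    have hxM : x < M := (hmem x).mp (List.mem_append_left b hx)
    refine ⟨?_, hxM⟩
    by_contra hc
    push_neg at hc
    have : x ∈ b := by
      rw [hbperm.mem_iff, List.mem_range]; exact hc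
    exact hdisj x hx this
  refine ⟨hbperm, halt, ?_⟩
  have hmnd : (a.map (fun x => x - b.length)).Nodup := by
    refine List.Nodup.map_on ?_ hand
    intro x hx y hy hxy
    have h1 := (halt x hx).1
    have h2 := (halt y hy).1
    omega
  have hlm : (a.map (fun x => x - b.length)).length = a.length := by simp
  rw [← hlm]
  apply perm_range_of hmnd
  rw [hlm]
  intro x hx
  simp only [List.mem_map] at hx
  obtain ⟨z, hz, rfl⟩ := hx
  have := halt z hz
  omega


def PermWord (l : List ℕ) : Prop := l.Perm (List.range l.length)

def Phi (l : List ℕ) : List ℕ :=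
  if h : l = [] then [] else
    let m := l.length
    let k := min (l.idxOf (m - 1)) (m - 1)
    Phi ((l.take k).map (fun v => v - (m - 1 - k))) ++
      (m - 1) :: (Phi (l.drop (k + 1))).map (· + k)
termination_by l.length
decreasing_by
  all_goals
    have hl : 0 < l.length := List.length_pos_iff.mpr h
  · simp only [List.length_map, List.length_take]; omega
  · simp only [List.length_drop]; omega

def Psi (l : List ℕ) : List ℕ :=
  if h : l = [] then [] else
    let m := l.length
    let k := min (l.idxOf (m - 1)) (m - 1)
    (Psi (l.take k)).map (fun v => v + (m - 1 - k)) ++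
      (m - 1) :: Psi ((l.drop (k + 1)).map (fun v => v - k))
termination_by l.length
decreasing_by
  all_goals
    have hl : 0 < l.length := List.length_pos_iff.mpr h
  · simp only [List.length_take]; omega
  · simp only [List.length_map, List.length_drop]; omega



lemma permword_nodup {l : List ℕ} (hP : PermWord l) : l.Nodup :=
  hP.nodup_iff.mpr (List.nodup_range)

lemma permword_lt {l : List ℕ} (hP : PermWord l) : ∀ x ∈ l, x < l.length := by
  intro x hx
  have := hP.mem_iff.mp hx
  simpa [List.mem_range] using this

lemma setup {l : List ℕ} (hP : PermWord l) (hne : l ≠ []) :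
    l.idxOf (l.length - 1) < l.length ∧
    (l.take (l.idxOf (l.length - 1))).length = l.idxOf (l.length - 1) ∧
    (l.drop (l.idxOf (l.length - 1) + 1)).length = l.length - 1 - l.idxOf (l.length - 1) ∧
    l = l.take (l.idxOf (l.length - 1)) ++
        (l.length - 1) :: l.drop (l.idxOf (l.length - 1) + 1) ∧
    (l.take (l.idxOf (l.length - 1)) ++ l.drop (l.idxOf (l.length - 1) + 1)).Perm
      (List.range (l.length - 1)) := by
  have hm : 0 < l.length := List.length_pos_iff.mpr hne
  have hMm : l.length - 1 ∈ l := hP.mem_iff.mpr (by simp [List.mem_range]; omega)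
  have hk : l.idxOf (l.length - 1) < l.length := List.idxOf_lt_length_iff.mpr hMm
  have hsplit : l = l.take (l.idxOf (l.length - 1)) ++
      (l.length - 1) :: l.drop (l.idxOf (l.length - 1) + 1) := by
    conv_lhs => rw [← List.take_append_drop (l.idxOf (l.length - 1)) l]
    rw [List.drop_eq_getElem_cons hk, List.getElem_idxOf hk]
  refine ⟨hk, by simp [List.length_take]; omega, by simp [List.length_drop]; omega, hsplit, ?_⟩
  have h1 : (l.take (l.idxOf (l.length - 1)) ++
      (l.length - 1) :: l.drop (l.idxOf (l.length - 1) + 1)).Perm (List.range l.length) := by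
    rw [← hsplit]; exact hP
  have h2 : (List.range l.length).Perm ((l.length - 1) :: List.range (l.length - 1)) := by
    have : l.length = (l.length - 1) + 1 := by omega
    rw [this, List.range_succ]
    have := @List.perm_middle ℕ (l.length - 1) (List.range (l.length - 1)) []
    simpa using this
  exact ((List.perm_middle.symm.trans h1).trans h2).cons_inv

lemma wVal_at_index {l : List ℕ} (hk : l.idxOf (l.length - 1) < l.length) :
    wVal l (l.idxOf (l.length - 1)) = l.length - 1 := by
  rw [wVal_eq_get _ hk]
  simp [List.getElem_idxOf hk]

lemma sep132 {l : List ℕ} (hP : PermWord l) (hne : l ≠ []) (h132 : ¬ W132 l) :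
    ∀ x ∈ l.take (l.idxOf (l.length - 1)),
      ∀ y ∈ l.drop (l.idxOf (l.length - 1) + 1), y < x := by
  obtain ⟨hk, hal, hbl, hsplit, hab⟩ := setup hP hne
  set k := l.idxOf (l.length - 1) with hkdef
  intro x hx y hy
  obtain ⟨i, hi, hxi⟩ := mem_iff_wVal.mp hx
  obtain ⟨j, hj, hyj⟩ := mem_iff_wVal.mp hy
  rw [wVal_take hi] at hxi
  rw [wVal_drop hj] at hyj
  have hik : i < k := by rw [hal] at hi; exact hi
  have hjm : k + 1 + j < l.length := by simp [List.length_drop] at hj; omega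
  have hnd := permword_nodup hP
  by_contra hc
  push_neg at hc
  -- x ≤ y; show x < y
  have hxy : x ≠ y := by
    intro he
    rw [← hxi, ← hyj] at he
    rw [wVal_eq_get _ (by omega : i < l.length), wVal_eq_get _ hjm] at he
    simp only [List.get_eq_getElem] at he
    have := (hnd.getElem_inj_iff).mp he
    omega
  have hxy' : x < y := by omega
  have hyM : y < l.length - 1 := by
    have h1 : y < l.length := permword_lt hP y (by rw [← hyj]; exact wVal_mem hjm)
    have h2 : y ≠ l.length - 1 := by
      intro he
      rw [← hyj] at he
      have h3 := wVal_at_index hk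
      rw [← hkdef] at h3
      rw [← h3] at he
      rw [wVal_eq_get _ hjm, wVal_eq_get _ hk] at he
      simp only [List.get_eq_getElem] at he
      have := (hnd.getElem_inj_iff).mp he
      omega
    omega
  apply h132
  refine ⟨i, k, k + 1 + j, hik, by omega, hjm, ?_, ?_⟩
  · rw [hxi, hyj]; exact hxy'
  · have h3 : wVal l k = l.length - 1 := by rw [hkdef]; exact wVal_at_index (hkdef ▸ hk)
    rw [hyj, h3]; exact hyM

lemma sep231 {l : List ℕ} (hP : PermWord l) (hne : l ≠ []) (h231 : ¬ W231 l) :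
    ∀ x ∈ l.take (l.idxOf (l.length - 1)),
      ∀ y ∈ l.drop (l.idxOf (l.length - 1) + 1), x < y := by
  obtain ⟨hk, hal, hbl, hsplit, hab⟩ := setup hP hne
  set k := l.idxOf (l.length - 1) with hkdef
  intro x hx y hy
  obtain ⟨i, hi, hxi⟩ := mem_iff_wVal.mp hx
  obtain ⟨j, hj, hyj⟩ := mem_iff_wVal.mp hy
  rw [wVal_take hi] at hxi
  rw [wVal_drop hj] at hyj
  have hik : i < k := by rw [hal] at hi; exact hi
  have hjm : k + 1 + j < l.length := by simp [List.length_drop] at hj; omega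
  have hnd := permword_nodup hP
  by_contra hc
  push_neg at hc
  have hxy : x ≠ y := by
    intro he
    rw [← hxi, ← hyj] at he
    rw [wVal_eq_get _ (by omega : i < l.length), wVal_eq_get _ hjm] at he
    simp only [List.get_eq_getElem] at he
    have := (hnd.getElem_inj_iff).mp he
    omega
  have hxy' : y < x := by omega
  have hxM : x < l.length - 1 := by
    have h1 : x < l.length := permword_lt hP x (by rw [← hxi]; exact wVal_mem (by omega))
    have h2 : x ≠ l.length - 1 := by
      intro he
      rw [← hxi] at he
      have h3 := wVal_at_index hk
      rw [← hkdef] at h3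
      rw [← h3] at he
      rw [wVal_eq_get _ (by omega : i < l.length), wVal_eq_get _ hk] at he
      simp only [List.get_eq_getElem] at he
      have := (hnd.getElem_inj_iff).mp he
      omega
    omega
  apply h231
  refine ⟨i, k, k + 1 + j, hik, by omega, hjm, ?_, ?_⟩
  · rw [hxi, hyj]; exact hxy'
  · have h3 : wVal l k = l.length - 1 := by rw [hkdef]; exact wVal_at_index (hkdef ▸ hk)
    rw [hxi, h3]; exact hxM
lemma Phi_nil : Phi [] = [] := by rw [Phi]; simp

lemma Psi_nil : Psi [] = [] := by rw [Psi]; simp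

lemma Phi_of_ne {l : List ℕ} (hne : l ≠ []) (hk : l.idxOf (l.length - 1) ≤ l.length - 1) :
    Phi l = Phi ((l.take (l.idxOf (l.length - 1))).map
        (fun v => v - (l.length - 1 - l.idxOf (l.length - 1)))) ++
      (l.length - 1) :: (Phi (l.drop (l.idxOf (l.length - 1) + 1))).map
        (fun x => x + l.idxOf (l.length - 1)) := by
  conv_lhs => rw [Phi]
  rw [dif_neg hne]
  simp only [min_eq_left hk]

lemma Psi_of_ne {l : List ℕ} (hne : l ≠ []) (hk : l.idxOf (l.length - 1) ≤ l.length - 1) :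
    Psi l = (Psi (l.take (l.idxOf (l.length - 1)))).map
        (fun v => v + (l.length - 1 - l.idxOf (l.length - 1))) ++
      (l.length - 1) :: Psi ((l.drop (l.idxOf (l.length - 1) + 1)).map
        (fun v => v - l.idxOf (l.length - 1))) := by
  conv_lhs => rw [Psi]
  rw [dif_neg hne]
  simp only [min_eq_left hk]

lemma permword_nil : PermWord ([] : List ℕ) := by simp [PermWord]

lemma not_W231_nil : ¬ W231 ([] : List ℕ) := by
  rintro ⟨p, q, r, _, _, hr, _⟩
  simp at hr

lemma not_W132_nil : ¬ W132 ([] : List ℕ) := by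
  rintro ⟨p, q, r, _, _, hr, _⟩
  simp at hr

theorem Phi_spec : ∀ N l, l.length ≤ N → PermWord l → ¬ W132 l →
    PermWord (Phi l) ∧ (Phi l).length = l.length ∧ ¬ W231 (Phi l) ∧
      wDes (Phi l) = wDes l := by
  intro N
  induction N with
  | zero =>
    intro l hl hP h132
    have : l = [] := by rw [← List.length_eq_zero_iff]; omega
    subst this
    rw [Phi_nil]
    exact ⟨permword_nil, rfl, not_W231_nil, rfl⟩
  | succ N ih =>
    intro l hl hP h132
    by_cases hne : l = []
    · subst hne
      rw [Phi_nil]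
      exact ⟨permword_nil, rfl, not_W231_nil, rfl⟩
    obtain ⟨hk, hal, hbl, hsplit, hab⟩ := setup hP hne
    have hsep := sep132 hP hne h132
    have hm : 0 < l.length := List.length_pos_iff.mpr hne
    set k := l.idxOf (l.length - 1) with hkd
    set a := l.take k with had
    set b := l.drop (k + 1) with hbd
    obtain ⟨hbperm, haval, ha'perm⟩ := split_perm_range hab hsep
    rw [hbl] at hbperm haval ha'perm
    have hf : ∀ x ∈ a, ∀ y ∈ a, (x - (l.length - 1 - k) < y - (l.length - 1 - k) ↔ x < y) := by
      intro x hx y hy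
      have h1 := (haval x hx).1
      have h2 := (haval y hy).1
      omega
    set a' := a.map (fun x => x - (l.length - 1 - k)) with ha'd
    have hla' : a'.length = k := by rw [ha'd]; simp [hal]
    have hPa' : PermWord a' := by
      unfold PermWord
      rw [hla', ← hal]
      exact ha'perm
    have hPb : PermWord b := by
      unfold PermWord
      rw [hbl]
      exact hbperm
    have h132a : ¬ W132 a := by rw [had]; exact not_W132_take k h132
    have h132a' : ¬ W132 a' := fun hw => h132a ((W132_map_iff hf).mp hw)
    have h132b : ¬ W132 b := by rw [hbd]; exact not_W132_drop (k + 1) h132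
    obtain ⟨hPu, hlu, h231u, hdu⟩ := ih a' (by rw [hla']; omega) hPa' h132a'
    obtain ⟨hPw, hlw, h231w, hdw⟩ := ih b (by rw [hbl]; omega) hPb h132b
    set u := Phi a' with hud
    set w := Phi b with hwd
    set v := w.map (fun x => x + k) with hvd
    have hlu' : u.length = k := by rw [hlu, hla']
    have hlw' : w.length = l.length - 1 - k := by rw [hlw, hbl]
    have hlv : v.length = l.length - 1 - k := by rw [hvd]; simp [hlw']
    have hPhil : Phi l = u ++ (l.length - 1) :: v := by
      rw [hud, hvd, hwd, ha'd, had, hbd, hkd]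
      exact Phi_of_ne hne (by omega)
    have pu : u.Perm (List.range k) := by
      have := hPu; unfold PermWord at this; rwa [hlu'] at this
    have pw : w.Perm (List.range (l.length - 1 - k)) := by
      have := hPw; unfold PermWord at this; rwa [hlw'] at this
    have hmemu : ∀ x ∈ u, x < k := by
      intro x hx
      have := pu.mem_iff.mp hx
      simpa [List.mem_range] using this
    have hmemw : ∀ x ∈ w, x < l.length - 1 - k := by
      intro x hx
      have := pw.mem_iff.mp hx
      simpa [List.mem_range] using this
    have hmemv : ∀ y ∈ v, k ≤ y ∧ y < l.length - 1 := by
      intro y hy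
      rw [hvd] at hy
      simp only [List.mem_map] at hy
      obtain ⟨z, hz, rfl⟩ := hy
      have := hmemw z hz
      omega
    have hlen : (u ++ (l.length - 1) :: v).length = l.length := by
      simp only [List.length_append, List.length_cons, hlu', hlv]; omega
    refine ⟨?_, ?_, ?_, ?_⟩
    · -- PermWord
      unfold PermWord
      rw [hPhil, hlen]
      have p2 : (u ++ v).Perm (List.range (l.length - 1)) := by
        have pv : v.Perm ((List.range (l.length - 1 - k)).map (fun x => x + k)) := by
          rw [hvd]; exact pw.map _
        have e1 : (List.range (l.length - 1 - k)).map (fun x => x + k) =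
            (List.range (l.length - 1 - k)).map (fun x => k + x) :=
          List.map_congr_left (fun x _ => Nat.add_comm x k)
        have e2 : List.range (l.length - 1) =
            List.range k ++ (List.range (l.length - 1 - k)).map (fun x => k + x) := by
          have e : k + (l.length - 1 - k) = l.length - 1 := by omega
          conv_lhs => rw [← e, List.range_add]
        rw [e2]
        exact pu.append (e1 ▸ pv)
      have p3 := p2.cons (l.length - 1)
      have p4 : ((l.length - 1) :: List.range (l.length - 1)).Perm (List.range l.length) := by
        have e : l.length = (l.length - 1) + 1 := by omega
        rw [e, List.range_succ]
        have := (@List.perm_middle ℕ (l.length - 1) (List.range (l.length - 1)) []).symm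
        simpa using this
      exact (List.perm_middle.trans p3).trans p4
    · rw [hPhil]; exact hlen
    · rw [hPhil]
      apply not_W231_append h231u
      · intro hw231
        have hf2 : ∀ x ∈ w, ∀ y ∈ w, (x + k < y + k ↔ x < y) := by
          intro x _ y _; omega
        exact h231w ((W231_map_iff hf2).mp (by rw [hvd] at hw231; exact hw231))
      · intro x hx y hy
        have := hmemu x hx
        have := hmemv y hy
        omega
      · intro x hx
        have := hmemu x hx
        omega
      · intro y hy
        exact (hmemv y hy).2
    · rw [hPhil]
      conv_rhs => rw [hsplit]
      apply wDes_sandwich_congr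
      · rw [hlu', hal]
      · rw [hlv, hbl]
      · rw [hdu]
        exact wDes_map_iff hf
      · have hf2 : ∀ x ∈ w, ∀ y ∈ w, (x + k < y + k ↔ x < y) := by
          intro x _ y _; omega
        rw [hvd, wDes_map_iff hf2]
        exact hdw
      · intro x hx
        exact (haval x hx).2
      · intro y hy
        have : y < l.length - 1 - k := by
          have := hbperm.mem_iff.mp hy
          simpa [List.mem_range] using this
        omega
      · intro x hx
        have := hmemu x hx
        omega
      · intro y hy
        exact (hmemv y hy).2
theorem Psi_spec : ∀ N l, l.length ≤ N → PermWord l → ¬ W231 l →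
    PermWord (Psi l) ∧ (Psi l).length = l.length ∧ ¬ W132 (Psi l) := by
  intro N
  induction N with
  | zero =>
    intro l hl hP h231
    have : l = [] := by rw [← List.length_eq_zero_iff]; omega
    subst this
    rw [Psi_nil]
    exact ⟨permword_nil, rfl, not_W132_nil⟩
  | succ N ih =>
    intro l hl hP h231
    by_cases hne : l = []
    · subst hne
      rw [Psi_nil]
      exact ⟨permword_nil, rfl, not_W132_nil⟩
    obtain ⟨hk, hal, hbl, hsplit, hab⟩ := setup hP hne
    have hsep := sep231 hP hne h231
    have hm : 0 < l.length := List.length_pos_iff.mpr hne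
    set k := l.idxOf (l.length - 1) with hkd
    set a := l.take k with had
    set b := l.drop (k + 1) with hbd
    have hab' : (b ++ a).Perm (List.range (l.length - 1)) :=
      List.perm_append_comm.trans hab
    obtain ⟨haperm, hbval, hb'perm⟩ :=
      split_perm_range hab' (fun x hxb y hya => hsep y hya x hxb)
    rw [hal] at hbval hb'perm
    have hfb : ∀ x ∈ b, ∀ y ∈ b, (x - k < y - k ↔ x < y) := by
      intro x hx y hy
      have h1 := (hbval x hx).1
      have h2 := (hbval y hy).1
      omega
    set b' := b.map (fun x => x - k) with hb'd
    have hlb' : b'.length = l.length - 1 - k := by rw [hb'd]; simp [hbl]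
    have hPb' : PermWord b' := by
      unfold PermWord
      have e : b'.length = b.length := by rw [hb'd]; simp
      rw [e]
      exact hb'perm
    have hPa : PermWord a := by
      unfold PermWord
      exact haperm
    have h231a : ¬ W231 a := by rw [had]; exact not_W231_take k h231
    have h231b : ¬ W231 b := by rw [hbd]; exact not_W231_drop (k + 1) h231
    have h231b' : ¬ W231 b' := fun hw => h231b ((W231_map_iff hfb).mp hw)
    obtain ⟨hPs, hls, h132s⟩ := ih a (by rw [hal]; omega) hPa h231a
    obtain ⟨hPt, hlt, h132t⟩ := ih b' (by rw [hlb']; omega) hPb' h231b'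
    set s := Psi a with hsd
    set t := Psi b' with htd
    set u := s.map (fun x => x + (l.length - 1 - k)) with hud
    have hls' : s.length = k := by rw [hls, hal]
    have hlt' : t.length = l.length - 1 - k := by rw [hlt, hlb']
    have hlu : u.length = k := by rw [hud]; simp [hls']
    have hPsil : Psi l = u ++ (l.length - 1) :: t := by
      rw [hud, hsd, htd, hb'd, had, hbd, hkd]
      exact Psi_of_ne hne (by omega)
    have ps : s.Perm (List.range k) := by
      have := hPs; unfold PermWord at this; rwa [hls'] at this
    have pt : t.Perm (List.range (l.length - 1 - k)) := by
      have := hPt; unfold PermWord at this; rwa [hlt'] at this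
    have hmems : ∀ x ∈ s, x < k := by
      intro x hx
      have := ps.mem_iff.mp hx
      simpa [List.mem_range] using this
    have hmemt : ∀ x ∈ t, x < l.length - 1 - k := by
      intro x hx
      have := pt.mem_iff.mp hx
      simpa [List.mem_range] using this
    have hmemu : ∀ y ∈ u, l.length - 1 - k ≤ y ∧ y < l.length - 1 := by
      intro y hy
      rw [hud] at hy
      simp only [List.mem_map] at hy
      obtain ⟨z, hz, rfl⟩ := hy
      have := hmems z hz
      omega
    have hlen : (u ++ (l.length - 1) :: t).length = l.length := by
      simp only [List.length_append, List.length_cons, hlu, hlt']; omega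
    refine ⟨?_, ?_, ?_⟩
    · unfold PermWord
      rw [hPsil, hlen]
      have p2 : (u ++ t).Perm (List.range (l.length - 1)) := by
        have pu : u.Perm ((List.range k).map (fun x => x + (l.length - 1 - k))) := by
          rw [hud]; exact ps.map _
        have e1 : (List.range k).map (fun x => x + (l.length - 1 - k)) =
            (List.range k).map (fun x => (l.length - 1 - k) + x) :=
          List.map_congr_left (fun x _ => Nat.add_comm x _)
        have e2 : List.range (l.length - 1) =
            List.range (l.length - 1 - k) ++
              (List.range k).map (fun x => (l.length - 1 - k) + x) := by
          have e : (l.length - 1 - k) + k = l.length - 1 := by omega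
          conv_lhs => rw [← e, List.range_add]
        have p3 : (u ++ t).Perm (t ++ u) := List.perm_append_comm
        rw [e2]
        exact p3.trans (pt.append (e1 ▸ pu))
      have p3 := p2.cons (l.length - 1)
      have p4 : ((l.length - 1) :: List.range (l.length - 1)).Perm (List.range l.length) := by
        have e : l.length = (l.length - 1) + 1 := by omega
        rw [e, List.range_succ]
        have := (@List.perm_middle ℕ (l.length - 1) (List.range (l.length - 1)) []).symm
        simpa using this
      exact (List.perm_middle.trans p3).trans p4
    · rw [hPsil]; exact hlen
    · rw [hPsil]
      apply not_W132_append
      · intro hw132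
        have hf2 : ∀ x ∈ s, ∀ y ∈ s, (x + (l.length - 1 - k) < y + (l.length - 1 - k) ↔ x < y) := by
          intro x _ y _; omega
        exact h132s ((W132_map_iff hf2).mp (by rw [hud] at hw132; exact hw132))
      · exact h132t
      · intro x hx y hy
        have := hmemu x hx
        have := hmemt y hy
        omega
      · intro x hx
        exact (hmemu x hx).2
      · intro y hy
        have := hmemt y hy
        omega
theorem Psi_Phi : ∀ N l, l.length ≤ N → PermWord l → ¬ W132 l → Psi (Phi l) = l := by
  intro N
  induction N with
  | zero =>
    intro l hl _ _
    have : l = [] := by rw [← List.length_eq_zero_iff]; omega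
    subst this
    rw [Phi_nil, Psi_nil]
  | succ N ih =>
    intro l hl hP h132
    by_cases hne : l = []
    · subst hne; rw [Phi_nil, Psi_nil]
    obtain ⟨hk, hal, hbl, hsplit, hab⟩ := setup hP hne
    have hsep := sep132 hP hne h132
    have hm : 0 < l.length := List.length_pos_iff.mpr hne
    set k := l.idxOf (l.length - 1) with hkd
    set a := l.take k with had
    set b := l.drop (k + 1) with hbd
    obtain ⟨hbperm, haval, ha'perm⟩ := split_perm_range hab hsep
    rw [hbl] at hbperm haval ha'perm
    have hf : ∀ x ∈ a, ∀ y ∈ a, (x - (l.length - 1 - k) < y - (l.length - 1 - k) ↔ x < y) := by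
      intro x hx y hy
      have h1 := (haval x hx).1
      have h2 := (haval y hy).1
      omega
    set a' := a.map (fun x => x - (l.length - 1 - k)) with ha'd
    have hla' : a'.length = k := by rw [ha'd]; simp [hal]
    have hPa' : PermWord a' := by
      unfold PermWord
      rw [hla', ← hal]
      exact ha'perm
    have hPb : PermWord b := by
      unfold PermWord
      rw [hbl]
      exact hbperm
    have h132a : ¬ W132 a := by rw [had]; exact not_W132_take k h132
    have h132a' : ¬ W132 a' := fun hw => h132a ((W132_map_iff hf).mp hw)
    have h132b : ¬ W132 b := by rw [hbd]; exact not_W132_drop (k + 1) h132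
    obtain ⟨hPu, hlu, h231u, hdu⟩ := Phi_spec (N + 1) a' (by rw [hla']; omega) hPa' h132a'
    obtain ⟨hPw, hlw, h231w, hdw⟩ := Phi_spec (N + 1) b (by rw [hbl]; omega) hPb h132b
    set u := Phi a' with hud
    set w := Phi b with hwd
    set v := w.map (fun x => x + k) with hvd
    have hlu' : u.length = k := by rw [hlu, hla']
    have hlw' : w.length = l.length - 1 - k := by rw [hlw, hbl]
    have hlv : v.length = l.length - 1 - k := by rw [hvd]; simp [hlw']
    have hPhil : Phi l = u ++ (l.length - 1) :: v := by
      rw [hud, hvd, hwd, ha'd, had, hbd, hkd]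
      exact Phi_of_ne hne (by omega)
    have pu : u.Perm (List.range k) := by
      have := hPu; unfold PermWord at this; rwa [hlu'] at this
    have hmemu : ∀ x ∈ u, x < k := by
      intro x hx
      have := pu.mem_iff.mp hx
      simpa [List.mem_range] using this
    have hlen : (u ++ (l.length - 1) :: v).length = l.length := by
      simp only [List.length_append, List.length_cons, hlu', hlv]; omega
    set L := u ++ (l.length - 1) :: v with hLd
    have hLlen : L.length = l.length := hlen
    have hLne : L ≠ [] := by
      rw [hLd]; simp
    have hMnotu : (l.length - 1) ∉ u := by
      intro hMem
      have := hmemu _ hMem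
      omega
    have hidx : L.idxOf (L.length - 1) = k := by
      rw [hLlen, hLd, List.idxOf_append_of_notMem hMnotu, List.idxOf_cons_self, hlu']
      omega
    have htake : L.take k = u := by
      rw [hLd]
      exact List.take_left' hlu'
    have hdrop : L.drop (k + 1) = v := by
      rw [hLd]
      have : u ++ (l.length - 1) :: v = (u ++ [l.length - 1]) ++ v := by
        simp
      rw [this]
      exact List.drop_left' (by simp [hlu'])
    have hvw : v.map (fun x => x - k) = w := by
      rw [hvd, List.map_map]
      have : ((fun x => x - k) ∘ fun x => x + k) = id := by
        funext x; simp
      rw [this, List.map_id]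
    have hPsiL : Psi L = (Psi u).map (fun x => x + (l.length - 1 - k)) ++
        (l.length - 1) :: Psi w := by
      rw [Psi_of_ne hLne (by rw [hidx, hLlen]; omega)]
      rw [hidx, htake, hdrop, hvw, hLlen]
    have hPsiu : Psi u = a' := by
      rw [hud]
      exact ih a' (by rw [hla']; omega) hPa' h132a'
    have hPsiw : Psi w = b := by
      rw [hwd]
      exact ih b (by rw [hbl]; omega) hPb h132b
    have ha'a : a'.map (fun x => x + (l.length - 1 - k)) = a := by
      rw [ha'd, List.map_map]
      have : a.map ((fun x => x + (l.length - 1 - k)) ∘ fun x => x - (l.length - 1 - k)) = a.map id := by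
        apply List.map_congr_left
        intro x hx
        have := (haval x hx).1
        simp
        omega
      rw [this, List.map_id]
    rw [← hPhil] at hPsiL
    rw [hPsiL, hPsiu, hPsiw, ha'a, ← hsplit]

theorem Phi_Psi : ∀ N l, l.length ≤ N → PermWord l → ¬ W231 l → Phi (Psi l) = l := by
  intro N
  induction N with
  | zero =>
    intro l hl _ _
    have : l = [] := by rw [← List.length_eq_zero_iff]; omega
    subst this
    rw [Psi_nil, Phi_nil]
  | succ N ih =>
    intro l hl hP h231
    by_cases hne : l = []
    · subst hne; rw [Psi_nil, Phi_nil]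
    obtain ⟨hk, hal, hbl, hsplit, hab⟩ := setup hP hne
    have hsep := sep231 hP hne h231
    have hm : 0 < l.length := List.length_pos_iff.mpr hne
    set k := l.idxOf (l.length - 1) with hkd
    set a := l.take k with had
    set b := l.drop (k + 1) with hbd
    have hab' : (b ++ a).Perm (List.range (l.length - 1)) :=
      List.perm_append_comm.trans hab
    obtain ⟨haperm, hbval, hb'perm⟩ :=
      split_perm_range hab' (fun x hxb y hya => hsep y hya x hxb)
    rw [hal] at hbval hb'perm
    have hfb : ∀ x ∈ b, ∀ y ∈ b, (x - k < y - k ↔ x < y) := by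
      intro x hx y hy
      have h1 := (hbval x hx).1
      have h2 := (hbval y hy).1
      omega
    set b' := b.map (fun x => x - k) with hb'd
    have hlb' : b'.length = l.length - 1 - k := by rw [hb'd]; simp [hbl]
    have hPb' : PermWord b' := by
      unfold PermWord
      have e : b'.length = b.length := by rw [hb'd]; simp
      rw [e]
      exact hb'perm
    have hPa : PermWord a := by
      unfold PermWord
      exact haperm
    have h231a : ¬ W231 a := by rw [had]; exact not_W231_take k h231
    have h231b : ¬ W231 b := by rw [hbd]; exact not_W231_drop (k + 1) h231
    have h231b' : ¬ W231 b' := fun hw => h231b ((W231_map_iff hfb).mp hw)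
    obtain ⟨hPs, hls, h132s⟩ := Psi_spec (N + 1) a (by rw [hal]; omega) hPa h231a
    obtain ⟨hPt, hlt, h132t⟩ := Psi_spec (N + 1) b' (by rw [hlb']; omega) hPb' h231b'
    set s := Psi a with hsd
    set t := Psi b' with htd
    set u := s.map (fun x => x + (l.length - 1 - k)) with hud
    have hls' : s.length = k := by rw [hls, hal]
    have hlt' : t.length = l.length - 1 - k := by rw [hlt, hlb']
    have hlu : u.length = k := by rw [hud]; simp [hls']
    have hPsil : Psi l = u ++ (l.length - 1) :: t := by
      rw [hud, hsd, htd, hb'd, had, hbd, hkd]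
      exact Psi_of_ne hne (by omega)
    have ps : s.Perm (List.range k) := by
      have := hPs; unfold PermWord at this; rwa [hls'] at this
    have hmems : ∀ x ∈ s, x < k := by
      intro x hx
      have := ps.mem_iff.mp hx
      simpa [List.mem_range] using this
    have hmemu : ∀ y ∈ u, y < l.length - 1 := by
      intro y hy
      rw [hud] at hy
      simp only [List.mem_map] at hy
      obtain ⟨z, hz, rfl⟩ := hy
      have := hmems z hz
      omega
    have hlen : (u ++ (l.length - 1) :: t).length = l.length := by
      simp only [List.length_append, List.length_cons, hlu, hlt']; omega
    set L := u ++ (l.length - 1) :: t with hLd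
    have hLlen : L.length = l.length := hlen
    have hLne : L ≠ [] := by
      rw [hLd]; simp
    have hMnotu : (l.length - 1) ∉ u := by
      intro hMem
      have := hmemu _ hMem
      omega
    have hidx : L.idxOf (L.length - 1) = k := by
      rw [hLlen, hLd, List.idxOf_append_of_notMem hMnotu, List.idxOf_cons_self, hlu]
      omega
    have htake : L.take k = u := by
      rw [hLd]
      exact List.take_left' hlu
    have hdrop : L.drop (k + 1) = t := by
      rw [hLd]
      have : u ++ (l.length - 1) :: t = (u ++ [l.length - 1]) ++ t := by
        simp
      rw [this]
      exact List.drop_left' (by simp [hlu])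
    have hus : u.map (fun x => x - (l.length - 1 - k)) = s := by
      rw [hud, List.map_map]
      have : ((fun x => x - (l.length - 1 - k)) ∘ fun x => x + (l.length - 1 - k)) = id := by
        funext x; simp
      rw [this, List.map_id]
    have hPhiL : Phi L = Phi s ++ (l.length - 1) :: (Phi t).map (fun x => x + k) := by
      rw [Phi_of_ne hLne (by rw [hidx, hLlen]; omega)]
      rw [hidx, htake, hdrop, hLlen, hus]
    have hPhis : Phi s = a := by
      rw [hsd]
      exact ih a (by rw [hal]; omega) hPa h231a
    have hPhit : Phi t = b' := by
      rw [htd]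
      exact ih b' (by rw [hlb']; omega) hPb' h231b'
    have hb'b : b'.map (fun x => x + k) = b := by
      rw [hb'd, List.map_map]
      have : b.map ((fun x => x + k) ∘ fun x => x - k) = b.map id := by
        apply List.map_congr_left
        intro x hx
        have := (hbval x hx).1
        simp
        omega
      rw [this, List.map_id]
    rw [← hPsil] at hPhiL
    rw [hPhiL, hPhis, hPhit, hb'b, ← hsplit]

def toWord {n : ℕ} (σ : Equiv.Perm (Fin n)) : List ℕ := List.ofFn (fun i => (σ i : ℕ))

lemma toWord_length {n : ℕ} (σ : Equiv.Perm (Fin n)) : (toWord σ).length = n := by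
  simp [toWord]

lemma wVal_toWord {n : ℕ} (σ : Equiv.Perm (Fin n)) {i : ℕ} (h : i < n) :
    wVal (toWord σ) i = (σ ⟨i, h⟩ : ℕ) := by
  have h' : i < (toWord σ).length := by rw [toWord_length]; exact h
  rw [wVal_eq_get _ h']
  simp [toWord]

lemma permword_toWord {n : ℕ} (σ : Equiv.Perm (Fin n)) : PermWord (toWord σ) := by
  have hnd : (toWord σ).Nodup := by
    rw [toWord, List.nodup_ofFn]
    exact Fin.val_injective.comp σ.injective
  have hlt : ∀ x ∈ toWord σ, x < (toWord σ).length := by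
    intro x hx
    rw [toWord_length]
    rw [toWord, List.mem_ofFn] at hx
    obtain ⟨i, rfl⟩ := hx
    exact (σ i).2
  exact perm_range_of hnd hlt

lemma p132_vals : p132 0 = 0 ∧ p132 1 = 2 ∧ p132 2 = 1 := by decide

lemma p231_vals : p231 0 = 1 ∧ p231 1 = 2 ∧ p231 2 = 0 := by decide

lemma contains132_iff {n : ℕ} (σ : Equiv.Perm (Fin n)) :
    permContains σ p132 ↔ W132 (toWord σ) := by
  constructor
  · rintro ⟨f, hf, hiff⟩
    have h1 : σ (f 0) < σ (f 2) := by
      rw [← hiff 0 2]; decide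
    have h2 : σ (f 2) < σ (f 1) := by
      rw [← hiff 2 1]; decide
    refine ⟨(f 0).1, (f 1).1, (f 2).1, hf (by decide : (0 : Fin 3) < 1),
      hf (by decide : (1 : Fin 3) < 2), by rw [toWord_length]; exact (f 2).2, ?_, ?_⟩
    · rw [wVal_toWord σ (f 0).2, wVal_toWord σ (f 2).2]
      exact h1
    · rw [wVal_toWord σ (f 2).2, wVal_toWord σ (f 1).2]
      exact h2
  · rintro ⟨p, q, r, hpq, hqr, hr, h1, h2⟩
    rw [toWord_length] at hr
    have hp : p < n := by omega
    have hq : q < n := by omega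
    rw [wVal_toWord σ hp, wVal_toWord σ hr] at h1
    rw [wVal_toWord σ hr, wVal_toWord σ hq] at h2
    have hPQ : (⟨p, hp⟩ : Fin n) < ⟨q, hq⟩ := hpq
    have hQR : (⟨q, hq⟩ : Fin n) < ⟨r, hr⟩ := hqr
    have e2 : ∀ h : 2 < 3, (⟨2, h⟩ : Fin 3) = 2 := fun _ => rfl
    refine ⟨![⟨p, hp⟩, ⟨q, hq⟩, ⟨r, hr⟩], ?_, ?_⟩
    · intro i j hij
      fin_cases i <;> fin_cases j <;>
        simp only [Matrix.cons_val_zero, Matrix.cons_val_one, Matrix.head_cons,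
          Matrix.cons_val_two, Matrix.tail_cons, Matrix.cons_val_fin_one] <;>
        first
          | exact absurd hij (by decide)
          | exact hPQ
          | exact hQR
          | exact hPQ.trans hQR
    · intro i j
      fin_cases i <;> fin_cases j <;>
        simp only [Fin.mk_zero, Fin.mk_one, e2, Matrix.cons_val_zero, Matrix.cons_val_one,
          Matrix.head_cons, Matrix.cons_val_two, Matrix.tail_cons] <;>
        refine ⟨fun h => ?_, fun h => ?_⟩ <;>
        rw [Fin.lt_def] at h ⊢ <;>
        first
          | omega
          | (exfalso; revert h; decide)
          | decide

lemma contains231_iff {n : ℕ} (σ : Equiv.Perm (Fin n)) :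
    permContains σ p231 ↔ W231 (toWord σ) := by
  constructor
  · rintro ⟨f, hf, hiff⟩
    have h1 : σ (f 2) < σ (f 0) := by
      rw [← hiff 2 0]; decide
    have h2 : σ (f 0) < σ (f 1) := by
      rw [← hiff 0 1]; decide
    refine ⟨(f 0).1, (f 1).1, (f 2).1, hf (by decide : (0 : Fin 3) < 1),
      hf (by decide : (1 : Fin 3) < 2), by rw [toWord_length]; exact (f 2).2, ?_, ?_⟩
    · rw [wVal_toWord σ (f 2).2, wVal_toWord σ (f 0).2]
      exact h1
    · rw [wVal_toWord σ (f 0).2, wVal_toWord σ (f 1).2]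
      exact h2
  · rintro ⟨p, q, r, hpq, hqr, hr, h1, h2⟩
    rw [toWord_length] at hr
    have hp : p < n := by omega
    have hq : q < n := by omega
    rw [wVal_toWord σ hr, wVal_toWord σ hp] at h1
    rw [wVal_toWord σ hp, wVal_toWord σ hq] at h2
    have hPQ : (⟨p, hp⟩ : Fin n) < ⟨q, hq⟩ := hpq
    have hQR : (⟨q, hq⟩ : Fin n) < ⟨r, hr⟩ := hqr
    have e2 : ∀ h : 2 < 3, (⟨2, h⟩ : Fin 3) = 2 := fun _ => rfl
    refine ⟨![⟨p, hp⟩, ⟨q, hq⟩, ⟨r, hr⟩], ?_, ?_⟩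
    · intro i j hij
      fin_cases i <;> fin_cases j <;>
        simp only [Matrix.cons_val_zero, Matrix.cons_val_one, Matrix.head_cons,
          Matrix.cons_val_two, Matrix.tail_cons, Matrix.cons_val_fin_one] <;>
        first
          | exact absurd hij (by decide)
          | exact hPQ
          | exact hQR
          | exact hPQ.trans hQR
    · intro i j
      fin_cases i <;> fin_cases j <;>
        simp only [Fin.mk_zero, Fin.mk_one, e2, Matrix.cons_val_zero, Matrix.cons_val_one,
          Matrix.head_cons, Matrix.cons_val_two, Matrix.tail_cons] <;>
        refine ⟨fun h => ?_, fun h => ?_⟩ <;>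
        rw [Fin.lt_def] at h ⊢ <;>
        first
          | omega
          | (exfalso; revert h; decide)
          | decide

lemma desSet_eq_wDes {n : ℕ} (σ : Equiv.Perm (Fin n)) : desSet σ = wDes (toWord σ) := by
  unfold desSet wDes
  rw [toWord_length]
  ext i
  simp only [Finset.mem_filter, Finset.mem_Ico]
  constructor
  · rintro ⟨⟨h1, h2⟩, h3⟩
    refine ⟨⟨h1, h2⟩, ?_⟩
    have := h3 h2
    rw [wVal_toWord σ h2, wVal_toWord σ (show i - 1 < n by omega)]
    exact this
  · rintro ⟨⟨h1, h2⟩, h3⟩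
    refine ⟨⟨h1, h2⟩, ?_⟩
    intro h
    rw [wVal_toWord σ h2, wVal_toWord σ (show i - 1 < n by omega)] at h3
    exact h3

open scoped Classical in
noncomputable def fwFun (n : ℕ) (l : List ℕ) : Fin n → Fin n := fun i =>
  if hv : wVal l i < n then ⟨wVal l i, hv⟩ else i

open scoped Classical in
noncomputable def fromWord (n : ℕ) (l : List ℕ) : Equiv.Perm (Fin n) :=
  if h : Function.Bijective (fwFun n l) then Equiv.ofBijective _ h else 1

lemma fwFun_eq {n : ℕ} {l : List ℕ} (hl : l.length = n) (hP : PermWord l) (i : Fin n) :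
    (fwFun n l i : ℕ) = wVal l i := by
  have hv' : wVal l (i : ℕ) < l.length :=
    permword_lt hP _ (wVal_mem (show (i : ℕ) < l.length by rw [hl]; exact i.2))
  have hv : wVal l i < n := by omega
  simp [fwFun, hv]

lemma fwFun_bij {n : ℕ} {l : List ℕ} (hl : l.length = n) (hP : PermWord l) :
    Function.Bijective (fwFun n l) := by
  rw [Fintype.bijective_iff_injective_and_card]
  refine ⟨?_, rfl⟩
  intro i j hij
  have h1 : wVal l i = wVal l j := by
    rw [← fwFun_eq hl hP i, ← fwFun_eq hl hP j, hij]
  have hi : (i : ℕ) < l.length := by rw [hl]; exact i.2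
  have hj : (j : ℕ) < l.length := by rw [hl]; exact j.2
  rw [wVal_eq_get _ hi, wVal_eq_get _ hj] at h1
  simp only [List.get_eq_getElem] at h1
  have := ((permword_nodup hP).getElem_inj_iff).mp h1
  exact Fin.ext this

lemma fromWord_apply {n : ℕ} {l : List ℕ} (hl : l.length = n) (hP : PermWord l) (i : Fin n) :
    (fromWord n l i : ℕ) = wVal l i := by
  rw [fromWord, dif_pos (fwFun_bij hl hP)]
  rw [Equiv.ofBijective_apply]
  exact fwFun_eq hl hP i

lemma toWord_fromWord {n : ℕ} {l : List ℕ} (hl : l.length = n) (hP : PermWord l) :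
    toWord (fromWord n l) = l := by
  apply List.ext_getElem (by rw [toWord_length, hl])
  intro i h1 h2
  rw [toWord_length] at h1
  have : (toWord (fromWord n l))[i] = ((fromWord n l) ⟨i, h1⟩ : ℕ) := by
    simp [toWord]
  rw [this, fromWord_apply hl hP, wVal_eq_get _ h2]
  simp

lemma fromWord_toWord {n : ℕ} (σ : Equiv.Perm (Fin n)) : fromWord n (toWord σ) = σ := by
  apply Equiv.ext
  intro i
  apply Fin.ext
  rw [fromWord_apply (toWord_length σ) (permword_toWord σ), wVal_toWord σ i.2]
end DPB

open DPB in
/-- There is a descent-set-preserving bijection from Av_n(132) to Av_n(231). -/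
theorem des_preserving_bijection (n : ℕ) :
    ∃ f : {σ : Equiv.Perm (Fin n) // permAvoids σ p132} ≃
          {σ : Equiv.Perm (Fin n) // permAvoids σ p231},
      ∀ σ, desSet ((f σ) : Equiv.Perm (Fin n)) = desSet (σ : Equiv.Perm (Fin n)) := by
  have key : ∀ σ : Equiv.Perm (Fin n), permAvoids σ p132 → ¬ W132 (toWord σ) :=
    fun σ h hw => h ((contains132_iff σ).mpr hw)
  have key' : ∀ σ : Equiv.Perm (Fin n), permAvoids σ p231 → ¬ W231 (toWord σ) :=
    fun σ h hw => h ((contains231_iff σ).mpr hw)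
  refine ⟨{ toFun := fun σ => ⟨fromWord n (Phi (toWord σ.1)), ?_⟩
          , invFun := fun τ => ⟨fromWord n (Psi (toWord τ.1)), ?_⟩
          , left_inv := ?_, right_inv := ?_ }, ?_⟩
  · -- forward avoids 231
    obtain ⟨hP1, hl1, h231, _⟩ := Phi_spec (toWord σ.1).length (toWord σ.1) le_rfl
      (permword_toWord σ.1) (key σ.1 σ.2)
    have hl : (Phi (toWord σ.1)).length = n := hl1.trans (toWord_length σ.1)
    intro hc
    rw [permContains] at hc
    have := (contains231_iff (fromWord n (Phi (toWord σ.1)))).mp hc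
    rw [toWord_fromWord hl hP1] at this
    exact h231 this
  · -- backward avoids 132
    obtain ⟨hP1, hl1, h132⟩ := Psi_spec (toWord τ.1).length (toWord τ.1) le_rfl
      (permword_toWord τ.1) (key' τ.1 τ.2)
    have hl : (Psi (toWord τ.1)).length = n := hl1.trans (toWord_length τ.1)
    intro hc
    have := (contains132_iff (fromWord n (Psi (toWord τ.1)))).mp hc
    rw [toWord_fromWord hl hP1] at this
    exact h132 this
  · -- left inverse
    intro σ
    apply Subtype.ext
    obtain ⟨hP1, hl1, h231, _⟩ := Phi_spec (toWord σ.1).length (toWord σ.1) le_rfl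
      (permword_toWord σ.1) (key σ.1 σ.2)
    have hl : (Phi (toWord σ.1)).length = n := hl1.trans (toWord_length σ.1)
    show fromWord n (Psi (toWord (fromWord n (Phi (toWord σ.1))))) = σ.1
    rw [toWord_fromWord hl hP1,
      Psi_Phi (toWord σ.1).length (toWord σ.1) le_rfl (permword_toWord σ.1) (key σ.1 σ.2),
      fromWord_toWord]
  · -- right inverse
    intro τ
    apply Subtype.ext
    obtain ⟨hP1, hl1, h132⟩ := Psi_spec (toWord τ.1).length (toWord τ.1) le_rfl
      (permword_toWord τ.1) (key' τ.1 τ.2)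
    have hl : (Psi (toWord τ.1)).length = n := hl1.trans (toWord_length τ.1)
    show fromWord n (Phi (toWord (fromWord n (Psi (toWord τ.1))))) = τ.1
    rw [toWord_fromWord hl hP1,
      Phi_Psi (toWord τ.1).length (toWord τ.1) le_rfl (permword_toWord τ.1) (key' τ.1 τ.2),
      fromWord_toWord]
  · -- descent sets
    intro σ
    obtain ⟨hP1, hl1, h231, hdes⟩ := Phi_spec (toWord σ.1).length (toWord σ.1) le_rfl
      (permword_toWord σ.1) (key σ.1 σ.2)
    have hl : (Phi (toWord σ.1)).length = n := hl1.trans (toWord_length σ.1)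
    show desSet (fromWord n (Phi (toWord σ.1))) = desSet σ.1
    rw [desSet_eq_wDes, desSet_eq_wDes, toWord_fromWord hl hP1, hdes]
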